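/- Suppose L is generic, satisfies the triangle inequality, and l_1 ≥ l_i for all i ∈ [n]. Then for every vertex V of Γ(L) there exists a vertex of the form (I, {1}, J) (i.e., a vertex one of whose parts is the singleton {1}) at distance at most 2 from V in Γ(L). -/

import Mathlib

open Finset

/-- `I ⊆ [n]` is *short*: the sum of its lengths is less than that of its complement. -/
def ShortSet {n : ℕ} (L : Fin n → ℝ) (I : Finset (Fin n)) : Prop :=
  ∑ i ∈ I, L i < ∑ i ∈ Iᶜ, L i

/-- `I ⊆ [n]` is *long*: the sum of its lengths is greater than that of its complement. -/
def LongSet {n : ℕ} (L : Fin n → ℝ) (I : Finset (Fin n)) : Prop :=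
  ∑ i ∈ Iᶜ, L i < ∑ i ∈ I, L i

/-- The length vector `L` is *generic*. -/
def GenericVec {n : ℕ} (L : Fin n → ℝ) : Prop :=
  ∀ I : Finset (Fin n), ∑ i ∈ I, L i ≠ ∑ i ∈ Iᶜ, L i

/-- `L` satisfies the triangle inequality: every singleton is short. -/
def TriangleIneq {n : ℕ} (L : Fin n → ℝ) : Prop :=
  ∀ i : Fin n, ShortSet L {i}

/-- Ordered triples of subsets of `[n]`. -/
abbrev LTriple (n : ℕ) := Finset (Fin n) × Finset (Fin n) × Finset (Fin n)

/-- An ordered triple `(I, J, K)` representing a vertex of `Γ(L)`: three pairwise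
disjoint nonempty short sets whose union is `[n]`. -/
def IsVertex {n : ℕ} (L : Fin n → ℝ) (V : LTriple n) : Prop :=
  V.1.Nonempty ∧ V.2.1.Nonempty ∧ V.2.2.Nonempty ∧
  ShortSet L V.1 ∧ ShortSet L V.2.1 ∧ ShortSet L V.2.2 ∧
  Disjoint V.1 V.2.1 ∧ Disjoint V.1 V.2.2 ∧ Disjoint V.2.1 V.2.2 ∧
  V.1 ∪ V.2.1 ∪ V.2.2 = Finset.univ

/-- Cyclic rotation of an ordered triple. -/
def rotT {n : ℕ} (V : LTriple n) : LTriple n := (V.2.1, V.2.2, V.1)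

/-- Two ordered triples represent the same cyclically ordered partition
(`(I,J,K)`, `(J,K,I)` and `(K,I,J)` are identified). -/
def CyclEq {n : ℕ} (V W : LTriple n) : Prop :=
  W = V ∨ W = rotT V ∨ W = rotT (rotT V)

/-- The mirror image of the vertex `(I, J, K)` is the vertex `(J, I, K)`. -/
def mirrorT {n : ℕ} (V : LTriple n) : LTriple n := (V.2.1, V.1, V.2.2)

/-- The elementary move on representatives: shift a nonempty proper subset
`S ⊊ I` to the second part, provided `J ∪ S` stays short. -/
def MoveStep {n : ℕ} (L : Fin n → ℝ) (V W : LTriple n) : Prop :=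
  ∃ S : Finset (Fin n), S.Nonempty ∧ S ⊂ V.1 ∧ ShortSet L (V.2.1 ∪ S) ∧
    W = (V.1 \ S, V.2.1 ∪ S, V.2.2)

/-- Adjacency in `Γ(L)`: one of the two vertices has a representative from which an
elementary move leads to a representative of the other. -/
def GammaAdj {n : ℕ} (L : Fin n → ℝ) (V W : LTriple n) : Prop :=
  (∃ V' W' : LTriple n, CyclEq V V' ∧ MoveStep L V' W' ∧ CyclEq W W') ∨
  (∃ W' V' : LTriple n, CyclEq W W' ∧ MoveStep L W' V' ∧ CyclEq V V')

/-- There is a path of length `m` (i.e. with `m` consecutive edges) in `Γ(L)`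
from the vertex `V` to the vertex `W`. -/
def GammaPath {n : ℕ} (L : Fin n → ℝ) (m : ℕ) (V W : LTriple n) : Prop :=
  ∃ f : ℕ → LTriple n, CyclEq V (f 0) ∧ CyclEq W (f m) ∧
    (∀ i ≤ m, IsVertex L (f i)) ∧ ∀ i < m, GammaAdj L (f i) (f (i + 1))

section Helpers
variable {n : ℕ} {L : Fin n → ℝ}

lemma short_iff (I : Finset (Fin n)) :
    ShortSet L I ↔ 2 * ∑ i ∈ I, L i < ∑ i, L i := by
  have h := Finset.sum_add_sum_compl I L
  unfold ShortSet
  constructor <;> intro hh <;> linarith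

lemma short_mono (hpos : ∀ i, 0 < L i) {I I' : Finset (Fin n)} (h : I ⊆ I')
    (h' : ShortSet L I') : ShortSet L I := by
  rw [short_iff] at h' ⊢
  have : ∑ i ∈ I, L i ≤ ∑ i ∈ I', L i :=
    Finset.sum_le_sum_of_subset_of_nonneg h (fun i _ _ => (hpos i).le)
  linarith

lemma short_compl (hgen : GenericVec L) {I : Finset (Fin n)}
    (h : ¬ ShortSet L I) : ShortSet L Iᶜ := by
  unfold ShortSet at h ⊢
  rw [compl_compl]
  push_neg at h
  exact lt_of_le_of_ne h fun e => hgen I e.symm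

lemma rot3 (V : LTriple n) : rotT (rotT (rotT V)) = V := rfl

lemma cyclEq_refl (V : LTriple n) : CyclEq V V := Or.inl rfl

lemma cyclEq_trans {V W X : LTriple n} (h1 : CyclEq V W) (h2 : CyclEq W X) :
    CyclEq V X := by
  rcases h1 with rfl | rfl | rfl <;> rcases h2 with rfl | rfl | rfl <;>
    first
      | exact Or.inl rfl
      | exact Or.inr (Or.inl rfl)
      | exact Or.inr (Or.inr rfl)

lemma cyclEq_symm {V W : LTriple n} (h : CyclEq V W) : CyclEq W V := by
  rcases h with rfl | rfl | rfl
  · exact Or.inl rfl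
  · exact Or.inr (Or.inr rfl)
  · exact Or.inr (Or.inl rfl)

lemma isVertex_rot {V : LTriple n} (h : IsVertex L V) : IsVertex L (rotT V) := by
  obtain ⟨h1, h2, h3, h4, h5, h6, h7, h8, h9, h10⟩ := h
  refine ⟨h2, h3, h1, h5, h6, h4, h9, h7.symm, h8.symm, ?_⟩
  rw [Finset.eq_univ_iff_forall] at h10 ⊢
  intro x
  have := h10 x
  simp only [Finset.mem_union, rotT] at *
  tauto

lemma path_congr_right {m : ℕ} {V W T : LTriple n} (hp : GammaPath L m V W)
    (h : CyclEq T W) : GammaPath L m V T := by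
  obtain ⟨f, h0, hm, hv, he⟩ := hp
  exact ⟨f, h0, cyclEq_trans h hm, hv, he⟩

lemma path_congr_left {m : ℕ} {V V' T : LTriple n} (hp : GammaPath L m V' T)
    (h : CyclEq V V') : GammaPath L m V T := by
  obtain ⟨f, h0, hm, hv, he⟩ := hp
  exact ⟨f, cyclEq_trans h h0, hm, hv, he⟩

lemma path0 {V : LTriple n} (hV : IsVertex L V) : GammaPath L 0 V V :=
  ⟨fun _ => V, cyclEq_refl V, cyclEq_refl V, fun _ _ => hV, fun i hi => by omega⟩

lemma path1 {V W : LTriple n} (hV : IsVertex L V) (hW : IsVertex L W)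
    (hadj : GammaAdj L V W) : GammaPath L 1 V W := by
  refine ⟨fun i => if i = 0 then V else W, by simp [cyclEq_refl], by simp [cyclEq_refl], ?_, ?_⟩
  · intro i hi
    interval_cases i <;> simp [hV, hW]
  · intro i hi
    interval_cases i
    simpa using hadj

lemma path2 {V M W : LTriple n} (hV : IsVertex L V) (hM : IsVertex L M)
    (hW : IsVertex L W) (h1 : GammaAdj L V M) (h2 : GammaAdj L M W) :
    GammaPath L 2 V W := by
  refine ⟨fun i => if i = 0 then V else if i = 1 then M else W,
    by simp [cyclEq_refl], by simp [cyclEq_refl], ?_, ?_⟩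
  · intro i hi
    interval_cases i <;> simp [hV, hM, hW]
  · intro i hi
    interval_cases i <;> simp [h1, h2]

lemma isVertex_of (I J K : Finset (Fin n)) (h1 : I.Nonempty) (h2 : J.Nonempty)
    (h3 : K.Nonempty) (s1 : ShortSet L I) (s2 : ShortSet L J) (s3 : ShortSet L K)
    (d1 : ∀ x, x ∈ I → x ∉ J) (d2 : ∀ x, x ∈ I → x ∉ K) (d3 : ∀ x, x ∈ J → x ∉ K)
    (u : ∀ x, x ∈ I ∨ x ∈ J ∨ x ∈ K) : IsVertex L ((I, J, K) : LTriple n) := by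
  refine ⟨h1, h2, h3, s1, s2, s3, Finset.disjoint_left.2 (fun {x} hx => d1 x hx),
    Finset.disjoint_left.2 (fun {x} hx => d2 x hx),
    Finset.disjoint_left.2 (fun {x} hx => d3 x hx), ?_⟩
  rw [Finset.eq_univ_iff_forall]
  intro x
  simp only [Finset.mem_union]
  rcases u x with h | h | h <;> tauto

end Helpers

set_option maxHeartbeats 1000000 in
lemma key {n : ℕ} (L : Fin n → ℝ) (hpos : ∀ i, 0 < L i) (hgen : GenericVec L)
    (htri : TriangleIneq L) (a : Fin n) (hmax : ∀ i, L i ≤ L a)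
    (I J K : Finset (Fin n)) (hV : IsVertex L ((I, J, K) : LTriple n)) (ha : a ∈ I) :
    ∃ I' J' : Finset (Fin n), IsVertex L ((I', {a}, J') : LTriple n) ∧
      ∃ m ≤ 2, GammaPath L m (I, J, K) ((I', {a}, J') : LTriple n) := by
  classical
  have hVc := hV
  obtain ⟨hIne, hJne, hKne, hIs, hJs, hKs, hIJ, hIK, hJK, huniv⟩ := hVc
  have mIJ : ∀ x, x ∈ I → x ∉ J := fun x hx => Finset.disjoint_left.1 hIJ hx
  have mIK : ∀ x, x ∈ I → x ∉ K := fun x hx => Finset.disjoint_left.1 hIK hx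
  have mJK : ∀ x, x ∈ J → x ∉ K := fun x hx => Finset.disjoint_left.1 hJK hx
  have mu : ∀ x, x ∈ I ∨ x ∈ J ∨ x ∈ K := by
    intro x
    have := (Finset.eq_univ_iff_forall.1 huniv) x
    simpa [Finset.mem_union] using this
  have maJ : a ∉ J := mIJ a ha
  have maK : a ∉ K := mIK a ha
  set A := I.erase a with hAdef
  have mA : ∀ x, x ∈ A ↔ x ≠ a ∧ x ∈ I := fun x => Finset.mem_erase
  have mAI : A ⊆ I := Finset.erase_subset a I
  have maA : a ∉ A := Finset.notMem_erase a I
  have hAI : A ⊂ I := Finset.erase_ssubset ha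
  have haA : {a} ∪ A = I := by
    rw [hAdef, ← Finset.insert_eq, Finset.insert_erase ha]
  rcases Finset.eq_empty_or_nonempty A with hAe | hAne
  · -- I = {a} : distance 0
    have hI : I = {a} := by rw [← haA, hAe, Finset.union_empty]
    refine ⟨K, J, ?_, 0, by norm_num, ?_⟩
    · have h2 := isVertex_rot (isVertex_rot hV)
      rw [hI] at h2
      exact h2
    · exact path_congr_right (path0 hV) (Or.inr (Or.inl (by rw [hI]; rfl)))
  · by_cases h1 : ShortSet L (J ∪ A)
    · -- single move S = A : (I,J,K) → ({a}, J∪A, K)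
      have hsd : I \ A = {a} := by
        ext x
        simp only [Finset.mem_sdiff, Finset.mem_singleton, mA]
        constructor
        · rintro ⟨hxI, hn⟩
          by_contra hxa
          exact hn ⟨hxa, hxI⟩
        · rintro rfl
          exact ⟨ha, fun h => h.1 rfl⟩
      have hWv : IsVertex L (({a}, J ∪ A, K) : LTriple n) := by
        refine isVertex_of _ _ _ (Finset.singleton_nonempty a)
          (hJne.mono Finset.subset_union_left) hKne (htri a) h1 hKs ?_ ?_ ?_ ?_
        · intro x hx
          rw [Finset.mem_singleton] at hx
          subst hx
          simp [Finset.mem_union, maJ, maA]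
        · intro x hx
          rw [Finset.mem_singleton] at hx
          subst hx
          exact maK
        · intro x hx
          rw [Finset.mem_union] at hx
          rcases hx with hx | hx
          · exact mJK x hx
          · exact mIK x (mAI hx)
        · intro x
          simp only [Finset.mem_union, Finset.mem_singleton, mA]
          have h1x := mu x
          rcases em (x = a) with rfl | hxa <;> tauto
      have hadj : GammaAdj L (I, J, K) ({a}, J ∪ A, K) := by
        left
        refine ⟨(I, J, K), ({a}, J ∪ A, K), cyclEq_refl _, ?_, cyclEq_refl _⟩
        exact ⟨A, hAne, hAI, h1, by simp [hsd]⟩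
      exact ⟨K, J ∪ A, isVertex_rot (isVertex_rot hWv), 1, by norm_num,
        path_congr_right (path1 hV hWv hadj) (Or.inr (Or.inl rfl))⟩
    · by_cases h2 : ShortSet L (K ∪ A)
      · -- single (backward) move : (I,J,K) → ({a}, J, K∪A)
        have hKA : (K ∪ A) \ A = K := by
          ext x
          simp only [Finset.mem_sdiff, Finset.mem_union, mA]
          have h1x := mIK x
          constructor
          · rintro ⟨hx | hx, hn⟩
            · exact hx
            · exact absurd hx hn
          · intro hx
            exact ⟨Or.inl hx, fun hxA => h1x hxA.2 hx⟩
        have hWv : IsVertex L (({a}, J, K ∪ A) : LTriple n) := by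
          refine isVertex_of _ _ _ (Finset.singleton_nonempty a) hJne
            (hKne.mono Finset.subset_union_left) (htri a) hJs h2 ?_ ?_ ?_ ?_
          · intro x hx
            rw [Finset.mem_singleton] at hx
            subst hx
            exact maJ
          · intro x hx
            rw [Finset.mem_singleton] at hx
            subst hx
            simp [Finset.mem_union, maK, maA]
          · intro x hx
            rw [Finset.mem_union]
            have h1x := mJK x
            have h2x := mIJ x
            have h3x := mAI (x := x)
            rw [mA]
            rcases em (x = a) with rfl | hxa <;> tauto
          · intro x
            simp only [Finset.mem_union, Finset.mem_singleton, mA]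
            have h1x := mu x
            rcases em (x = a) with rfl | hxa <;> tauto
        have hadj : GammaAdj L (I, J, K) ({a}, J, K ∪ A) := by
          right
          refine ⟨(K ∪ A, {a}, J), (K, I, J), Or.inr (Or.inr rfl), ?_, Or.inr (Or.inr rfl)⟩
          refine ⟨A, hAne, ?_, ?_, ?_⟩
          · obtain ⟨k, hk⟩ := hKne
            exact (Finset.ssubset_iff_of_subset Finset.subset_union_right).2
              ⟨k, Finset.mem_union_left _ hk, fun hkA => mIK k (mAI hkA) hk⟩
          · show ShortSet L ({a} ∪ A)
            rw [haA]
            exact hIs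
          · rw [Prod.ext_iff, Prod.ext_iff]
            exact ⟨hKA.symm, haA.symm, rfl⟩
        exact ⟨K ∪ A, J, isVertex_rot (isVertex_rot hWv), 1, by norm_num,
          path_congr_right (path1 hV hWv hadj) (Or.inr (Or.inl rfl))⟩
      · -- two moves
        have hs1 : ShortSet L ({a} ∪ K) := by
          have hcs := short_compl hgen h1
          have ceq : (J ∪ A)ᶜ = {a} ∪ K := by
            ext x
            simp only [Finset.mem_compl, Finset.mem_union, Finset.mem_singleton, mA]
            have h1x := mu x
            have h2x := mIJ x
            have h3x := mIK x
            have h4x := mJK x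
            rcases em (x = a) with rfl | hxa <;> tauto
          rwa [ceq] at hcs
        have hs2 : ShortSet L ({a} ∪ J) := by
          have hcs := short_compl hgen h2
          have ceq : (K ∪ A)ᶜ = {a} ∪ J := by
            ext x
            simp only [Finset.mem_compl, Finset.mem_union, Finset.mem_singleton, mA]
            have h1x := mu x
            have h2x := mIJ x
            have h3x := mIK x
            have h4x := mJK x
            rcases em (x = a) with rfl | hxa <;> tauto
          rwa [ceq] at hcs
        have sumub : ∀ (X : Finset (Fin n)) (j : Fin n), j ∉ X → a ∉ X →
            ShortSet L ({a} ∪ X) → ShortSet L (X ∪ {j}) := by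
          intro X j hj haX hs
          rw [short_iff] at hs ⊢
          rw [Finset.sum_union (Finset.disjoint_singleton_right.2 hj),
            Finset.sum_singleton]
          rw [Finset.sum_union (Finset.disjoint_singleton_left.2 haX),
            Finset.sum_singleton] at hs
          have := hmax j
          linarith
        set 𝒮 : Finset (Finset (Fin n)) :=
          A.powerset.filter (fun S => S.Nonempty ∧ ShortSet L (J ∪ S)) with h𝒮
        obtain ⟨j₀, hj₀⟩ := hAne
        have h𝒮ne : 𝒮.Nonempty := by
          refine ⟨{j₀}, ?_⟩
          simp only [h𝒮, Finset.mem_filter, Finset.mem_powerset]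
          exact ⟨Finset.singleton_subset_iff.2 hj₀, Finset.singleton_nonempty _,
            sumub J j₀ (fun h => mIJ j₀ (mAI hj₀) h) maJ hs2⟩
        obtain ⟨S, hS, hSmax⟩ := Finset.exists_max_image 𝒮 Finset.card h𝒮ne
        simp only [h𝒮, Finset.mem_filter, Finset.mem_powerset] at hS
        obtain ⟨hSA, hSne, hSshort⟩ := hS
        have mSI : S ⊆ I := hSA.trans mAI
        have haS : a ∉ S := fun h => maA (hSA h)
        have hSI : S ⊂ I := lt_of_le_of_lt hSA hAI
        have hASne : (A \ S).Nonempty := by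
          rw [Finset.sdiff_nonempty]
          intro hsub
          rw [Finset.Subset.antisymm hSA hsub] at hSshort
          exact h1 hSshort
        have hKAS : ShortSet L (K ∪ (A \ S)) := by
          by_contra hcon
          have hcs := short_compl hgen hcon
          have ceq : (K ∪ (A \ S))ᶜ = ({a} ∪ (J ∪ S)) := by
            ext x
            simp only [Finset.mem_compl, Finset.mem_union, Finset.mem_singleton,
              Finset.mem_sdiff, mA]
            have h1x := mu x
            have h2x := mIJ x
            have h3x := mIK x
            have h4x := mJK x
            have h5x : x ∈ S → x ∈ A := fun h => hSA h
            rw [mA] at h5x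
            rcases em (x = a) with rfl | hxa <;> by_cases hxS : x ∈ S <;> tauto
          rw [ceq] at hcs
          obtain ⟨j₁, hj₁⟩ := hASne
          obtain ⟨hj₁A, hj₁S⟩ := Finset.mem_sdiff.1 hj₁
          have hj₁JS : j₁ ∉ J ∪ S := by
            rw [Finset.mem_union]
            push_neg
            exact ⟨mIJ j₁ (mAI hj₁A), hj₁S⟩
          have haJS : a ∉ J ∪ S := by
            rw [Finset.mem_union]
            push_neg
            exact ⟨maJ, haS⟩
          have hnew : ShortSet L ((J ∪ S) ∪ {j₁}) := sumub (J ∪ S) j₁ hj₁JS haJS hcs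
          have hmem : (S ∪ {j₁}) ∈ 𝒮 := by
            simp only [h𝒮, Finset.mem_filter, Finset.mem_powerset]
            refine ⟨Finset.union_subset hSA (Finset.singleton_subset_iff.2 hj₁A),
              hSne.mono Finset.subset_union_left, ?_⟩
            rwa [← Finset.union_assoc]
          have hcard := hSmax _ hmem
          have : S.card < (S ∪ {j₁}).card := by
            rw [Finset.union_comm, ← Finset.insert_eq,
              Finset.card_insert_of_notMem hj₁S]
            omega
          omega
        -- identities
        have hIS : I \ S = {a} ∪ (A \ S) := by
          ext x
          simp only [Finset.mem_sdiff, Finset.mem_union, Finset.mem_singleton, mA]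
          have h5x : x ∈ S → x ∈ A := fun h => hSA h
          rw [mA] at h5x
          rcases em (x = a) with rfl | hxa <;> by_cases hxS : x ∈ S <;> tauto
        have hKsd : (K ∪ (A \ S)) \ (A \ S) = K := by
          ext x
          simp only [Finset.mem_sdiff, Finset.mem_union]
          have h1x := mIK x
          have h2x : x ∈ A → x ∈ I := fun h => mAI h
          constructor
          · rintro ⟨hx | hx, hn⟩
            · exact hx
            · exact absurd hx hn
          · intro hx
            refine ⟨Or.inl hx, ?_⟩
            rintro ⟨hxA, -⟩
            exact h1x (h2x hxA) hx
        -- vertices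
        have hMv : IsVertex L ((I \ S, J ∪ S, K) : LTriple n) := by
          refine isVertex_of _ _ _ ⟨a, Finset.mem_sdiff.2 ⟨ha, haS⟩⟩
            (hJne.mono Finset.subset_union_left) hKne
            (short_mono hpos Finset.sdiff_subset hIs) hSshort hKs ?_ ?_ ?_ ?_
          · intro x hx
            rw [Finset.mem_sdiff] at hx
            rw [Finset.mem_union]
            push_neg
            exact ⟨mIJ x hx.1, hx.2⟩
          · intro x hx
            rw [Finset.mem_sdiff] at hx
            exact mIK x hx.1
          · intro x hx
            rw [Finset.mem_union] at hx
            rcases hx with hx | hx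
            · exact mJK x hx
            · exact mIK x (mSI hx)
          · intro x
            simp only [Finset.mem_sdiff, Finset.mem_union]
            have h1x := mu x
            by_cases hxS : x ∈ S <;> tauto
        have hWv : IsVertex L (({a}, J ∪ S, K ∪ (A \ S)) : LTriple n) := by
          refine isVertex_of _ _ _ (Finset.singleton_nonempty a)
            (hJne.mono Finset.subset_union_left) (hKne.mono Finset.subset_union_left)
            (htri a) hSshort hKAS ?_ ?_ ?_ ?_
          · intro x hx
            rw [Finset.mem_singleton] at hx
            subst hx
            simp [Finset.mem_union, maJ, haS]
          · intro x hx
            rw [Finset.mem_singleton] at hx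
            subst hx
            simp only [Finset.mem_union, Finset.mem_sdiff]
            push_neg
            refine ⟨maK, fun h => absurd h maA⟩
          · intro x hx
            rw [Finset.mem_union] at hx
            simp only [Finset.mem_union, Finset.mem_sdiff]
            push_neg
            rcases hx with hx | hx
            · exact ⟨mJK x hx, fun hxA => absurd (mIJ x (mAI hxA)) (not_not_intro hx)⟩
            · exact ⟨mIK x (mSI hx), fun _ => hx⟩
          · intro x
            rcases em (x = a) with rfl | hxa
            · exact Or.inl (Finset.mem_singleton_self _)
            · rcases mu x with hx | hx | hx
              · by_cases hxS : x ∈ S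
                · exact Or.inr (Or.inl (Finset.mem_union_right _ hxS))
                · exact Or.inr (Or.inr (Finset.mem_union_right _
                    (Finset.mem_sdiff.2 ⟨(mA x).2 ⟨hxa, hx⟩, hxS⟩)))
              · exact Or.inr (Or.inl (Finset.mem_union_left _ hx))
              · exact Or.inr (Or.inr (Finset.mem_union_left _ hx))
        have hadj1 : GammaAdj L (I, J, K) (I \ S, J ∪ S, K) := by
          left
          exact ⟨(I, J, K), (I \ S, J ∪ S, K), cyclEq_refl _,
            ⟨S, hSne, hSI, hSshort, rfl⟩, cyclEq_refl _⟩
        have hadj2 : GammaAdj L (I \ S, J ∪ S, K) ({a}, J ∪ S, K ∪ (A \ S)) := by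
          right
          refine ⟨(K ∪ (A \ S), {a}, J ∪ S), (K, I \ S, J ∪ S),
            Or.inr (Or.inr rfl), ?_, Or.inr (Or.inr rfl)⟩
          refine ⟨A \ S, hASne, ?_, ?_, ?_⟩
          · obtain ⟨k, hk⟩ := hKne
            refine (Finset.ssubset_iff_of_subset Finset.subset_union_right).2
              ⟨k, Finset.mem_union_left _ hk, ?_⟩
            rw [Finset.mem_sdiff]
            rintro ⟨hkA, -⟩
            exact mIK k (mAI hkA) hk
          · show ShortSet L ({a} ∪ (A \ S))
            rw [← hIS]
            exact short_mono hpos Finset.sdiff_subset hIs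
          · rw [Prod.ext_iff, Prod.ext_iff]
            exact ⟨hKsd.symm, hIS, rfl⟩
        exact ⟨K ∪ (A \ S), J ∪ S, isVertex_rot (isVertex_rot hWv), 2, le_refl 2,
          path_congr_right (path2 hV hMv hWv hadj1 hadj2) (Or.inr (Or.inl rfl))⟩

/-- If `L` is generic, satisfies the triangle inequality, and `l₁` is
a longest edge, then every vertex of `Γ(L)` is at distance at most 2 from some vertex
of the form `(I, {1}, J)` (edge `1` of the paper is index `0` in `Fin n`). -/
theorem singleton_longest_within_2 (n : ℕ) (hn : 3 ≤ n) (L : Fin n → ℝ)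
    (hpos : ∀ i, 0 < L i) (hgen : GenericVec L) (htri : TriangleIneq L)
    (hmax : ∀ i, L i ≤ L ⟨0, by omega⟩) :
    ∀ V : LTriple n, IsVertex L V →
      ∃ I J : Finset (Fin n),
        IsVertex L ((I, ({⟨0, by omega⟩} : Finset (Fin n)), J) : LTriple n) ∧
        ∃ m ≤ 2, GammaPath L m V ((I, ({⟨0, by omega⟩} : Finset (Fin n)), J) : LTriple n) := by
  intro V hV
  obtain ⟨I, J, K⟩ := V
  have hVc := hV
  obtain ⟨hIne, hJne, hKne, hIs, hJs, hKs, hIJ, hIK, hJK, huniv⟩ := hVc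
  set a : Fin n := ⟨0, by omega⟩ with hadef
  have ha : a ∈ I ∪ J ∪ K := by
    rw [huniv]
    exact Finset.mem_univ a
  rw [Finset.mem_union, Finset.mem_union] at ha
  rcases ha with (ha | ha) | ha
  · exact key L hpos hgen htri a hmax I J K hV ha
  · have hV1 : IsVertex L ((J, K, I) : LTriple n) := isVertex_rot hV
    obtain ⟨I', J', hvx, m, hm, hp⟩ := key L hpos hgen htri a hmax J K I hV1 ha
    exact ⟨I', J', hvx, m, hm, path_congr_left hp (Or.inr (Or.inl rfl))⟩
  · have hV2 : IsVertex L ((K, I, J) : LTriple n) := isVertex_rot (isVertex_rot hV)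
    obtain ⟨I', J', hvx, m, hm, hp⟩ := key L hpos hgen htri a hmax K I J hV2 ha
    exact ⟨I', J', hvx, m, hm, path_congr_left hp (Or.inr (Or.inr rfl))⟩
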